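/- Let n ≥ 1 be an integer, let ψ be a cutoff function with ∫_{ℝⁿ} ψ(|w|) dw > 0, and let u : ℝⁿ → ℝ^ν be continuously differentiable with ∫_{ℝⁿ} ‖Du‖ⁿ dz < ∞. Then there is a constant C, depending only on n and ψ, such that for all radii 0 < s ≤ r < 2s, sup_{x ∈ ℝⁿ} ‖(ψ_r ∗ u)(x) − (ψ_s ∗ u)(x)‖ ≤ C · (r/s − 1) · ( ∫_{ℝⁿ} ‖Du(z)‖ⁿ dz )^{1/n}. In particular, ψ_s ∗ u converges uniformly to ψ_r ∗ u as s → r, for every r > 0. -/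

import Mathlib

open MeasureTheory Metric

private lemma integral_shift_scale {n : ℕ} {F : Type*} [NormedAddCommGroup F] [NormedSpace ℝ F]
    (f : EuclideanSpace ℝ (Fin n) → F) {ρ : ℝ} (hρ : 0 < ρ) (x : EuclideanSpace ℝ (Fin n)) :
    ∫ z, f z = ρ ^ n • ∫ w, f (x - ρ • w) := by
  have h1 : ∫ z, f (x - z) = ∫ z, f z := integral_sub_left_eq_self f volume x
  have h2 : ∫ w, (fun y => f (x - y)) (ρ • w) = (ρ ^ n)⁻¹ • ∫ y, f (x - y) := by
    have := Measure.integral_comp_smul_of_nonneg volume (fun y => f (x - y)) ρ (hR := hρ.le)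
    rwa [finrank_euclideanSpace_fin] at this
  calc ∫ z, f z = ∫ y, f (x - y) := h1.symm
    _ = ρ ^ n • ((ρ ^ n)⁻¹ • ∫ y, f (x - y)) := by
        rw [smul_smul, mul_inv_cancel₀ (pow_ne_zero n hρ.ne'), one_smul]
    _ = ρ ^ n • ∫ w, f (x - ρ • w) := by rw [← h2]

private lemma dist_scale_eq {n : ℕ} {ρ : ℝ} (hρ : 0 < ρ) (x w : EuclideanSpace ℝ (Fin n)) :
    dist x (x - ρ • w) / ρ = ‖w‖ := by
  rw [dist_eq_norm, sub_sub_cancel, norm_smul, Real.norm_eq_abs, abs_of_pos hρ,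
    mul_div_cancel_left₀ _ hρ.ne']

private lemma moll_eq {n : ℕ} (ψ : ℝ → ℝ) {ν : ℕ}
    (u : EuclideanSpace ℝ (Fin n) → EuclideanSpace ℝ (Fin ν))
    {ρ : ℝ} (hρ : 0 < ρ) (x : EuclideanSpace ℝ (Fin n)) :
    ((∫ z, ψ (dist x z / ρ))⁻¹ • ∫ z, ψ (dist x z / ρ) • u z)
      = (∫ w : EuclideanSpace ℝ (Fin n), ψ ‖w‖)⁻¹ • ∫ w, ψ ‖w‖ • u (x - ρ • w) := by
  have hnum : (∫ z, ψ (dist x z / ρ) • u z) = ρ ^ n • ∫ w, ψ ‖w‖ • u (x - ρ • w) := by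
    rw [integral_shift_scale (fun z => ψ (dist x z / ρ) • u z) hρ x]
    congr 1
    refine integral_congr_ae (.of_forall fun w => ?_)
    simp only [dist_scale_eq hρ]
  have hden : (∫ z, ψ (dist x z / ρ)) = ρ ^ n * ∫ w : EuclideanSpace ℝ (Fin n), ψ ‖w‖ := by
    rw [integral_shift_scale (fun z => ψ (dist x z / ρ)) hρ x, smul_eq_mul]
    congr 1
    refine integral_congr_ae (.of_forall fun w => ?_)
    simp only [dist_scale_eq hρ]
  rw [hnum, hden, smul_smul]
  congr 1
  have h : ρ ^ n ≠ 0 := pow_ne_zero n hρ.ne'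
  rw [mul_inv, mul_comm ((ρ ^ n)⁻¹) _, mul_assoc, inv_mul_cancel₀ h, mul_one]


private lemma holder_step {n : ℕ} (hn : 1 ≤ n) {ψ : ℝ → ℝ}
    (hψ_mem : ∀ t : ℝ, 0 ≤ t → ψ t ∈ Set.Icc (0 : ℝ) 1)
    (hψ_supp : ∀ t : ℝ, 1 ≤ t → ψ t = 0)
    (hψc : Continuous fun w : EuclideanSpace ℝ (Fin n) => ψ ‖w‖)
    {h : EuclideanSpace ℝ (Fin n) → ℝ} (hh0 : ∀ w, 0 ≤ h w) (hhc : Continuous h)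
    (hhn : Integrable (fun w => h w ^ (n : ℝ)) volume) :
    ∫ w, ψ ‖w‖ * h w
      ≤ (∫ w, h w ^ (n : ℝ)) ^ ((1 : ℝ) / n)
        * (volume (closedBall (0 : EuclideanSpace ℝ (Fin n)) 1)).toReal ^ (1 - (1 : ℝ) / n) := by
  have hψ0 : ∀ w : EuclideanSpace ℝ (Fin n), 0 ≤ ψ ‖w‖ := fun w => (hψ_mem _ (norm_nonneg w)).1
  have hψ1 : ∀ w : EuclideanSpace ℝ (Fin n), ψ ‖w‖ ≤ 1 := fun w => (hψ_mem _ (norm_nonneg w)).2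
  rcases eq_or_lt_of_le hn with h1 | h2
  · -- n = 1
    have hn1 : n = 1 := h1.symm
    subst hn1
    simp only [Nat.cast_one, Real.rpow_one, div_one, sub_self, Real.rpow_zero, mul_one]
    have hint : Integrable h volume := by simpa [Real.rpow_one] using hhn
    refine integral_mono_of_nonneg (.of_forall fun w => mul_nonneg (hψ0 w) (hh0 w)) hint
      (.of_forall fun w => ?_)
    calc ψ ‖w‖ * h w ≤ 1 * h w := mul_le_mul_of_nonneg_right (hψ1 w) (hh0 w)
      _ = h w := one_mul _
  · -- 2 ≤ n
    set p : ℝ := (n : ℝ) with hp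
    have hp1 : 1 < p := by rw [hp]; exact_mod_cast h2
    have hpq : p.HolderConjugate (Real.conjExponent p) := .conjExponent hp1
    set q : ℝ := Real.conjExponent p with hq
    have hq0 : 0 < q := hpq.symm.pos
    -- Memℒp h p
    have hmemh : MemLp h (ENNReal.ofReal p) volume := by
      have hmeas : AEStronglyMeasurable h volume := hhc.aestronglyMeasurable
      have h1 : ((ENNReal.ofReal p) / (ENNReal.ofReal p)) = 1 :=
        ENNReal.div_self (by simp [ENNReal.ofReal_eq_zero, not_le, hpq.pos]) ENNReal.ofReal_ne_top
      have := (memLp_norm_rpow_iff (q := ENNReal.ofReal p) (p := ENNReal.ofReal p) hmeas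
        (by simp [ENNReal.ofReal_eq_zero, not_le, hpq.pos]) ENNReal.ofReal_ne_top)
      rw [h1, memLp_one_iff_integrable] at this
      apply this.1
      have : (fun w => ‖h w‖ ^ (ENNReal.ofReal p).toReal) = fun w => h w ^ (n : ℝ) := by
        funext w
        rw [Real.norm_of_nonneg (hh0 w), ENNReal.toReal_ofReal hpq.nonneg]
      rw [this]
      exact hhn
    -- Memℒp ψ∘norm q
    have hcsψ : HasCompactSupport fun w : EuclideanSpace ℝ (Fin n) => ψ ‖w‖ := by
      refine HasCompactSupport.intro (isCompact_closedBall 0 1) fun w hw => ?_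
      refine hψ_supp _ ?_
      simp only [mem_closedBall, dist_zero_right, not_le] at hw
      exact hw.le
    have hmemψ : MemLp (fun w : EuclideanSpace ℝ (Fin n) => ψ ‖w‖) (ENNReal.ofReal q) volume :=
      hψc.memLp_of_hasCompactSupport hcsψ
    have main := integral_mul_le_Lp_mul_Lq_of_nonneg hpq (μ := volume)
      (.of_forall hh0) (.of_forall hψ0) hmemh hmemψ
    -- second factor
    have hVq : ∫ w : EuclideanSpace ℝ (Fin n), (ψ ‖w‖) ^ q
        ≤ (volume (closedBall (0 : EuclideanSpace ℝ (Fin n)) 1)).toReal := by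
      have hind : Integrable ((closedBall (0 : EuclideanSpace ℝ (Fin n)) 1).indicator
          fun _ => (1 : ℝ)) volume := by
        rw [integrable_indicator_iff measurableSet_closedBall]
        exact integrableOn_const measure_closedBall_lt_top.ne
      have hle : ∀ w : EuclideanSpace ℝ (Fin n), (ψ ‖w‖) ^ q
          ≤ (closedBall (0 : EuclideanSpace ℝ (Fin n)) 1).indicator (fun _ => (1 : ℝ)) w := by
        intro w
        by_cases hw : w ∈ closedBall (0 : EuclideanSpace ℝ (Fin n)) 1
        · rw [Set.indicator_of_mem hw]
          exact Real.rpow_le_one (hψ0 w) (hψ1 w) hq0.le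
        · rw [Set.indicator_of_notMem hw]
          have : ψ ‖w‖ = 0 := by
            refine hψ_supp _ ?_
            simp only [mem_closedBall, dist_zero_right, not_le] at hw
            exact hw.le
          rw [this, Real.zero_rpow hq0.ne']
      calc ∫ w : EuclideanSpace ℝ (Fin n), (ψ ‖w‖) ^ q
          ≤ ∫ w, (closedBall (0 : EuclideanSpace ℝ (Fin n)) 1).indicator (fun _ => (1:ℝ)) w :=
            integral_mono_of_nonneg
              (.of_forall fun w => Real.rpow_nonneg (hψ0 w) q) hind (.of_forall hle)
        _ = (volume (closedBall (0 : EuclideanSpace ℝ (Fin n)) 1)).toReal := by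
            rw [integral_indicator_const (1:ℝ) measurableSet_closedBall, smul_eq_mul, mul_one]
            rfl
    have hq_exp : 1 / q = 1 - (1 : ℝ) / n := by
      have := hpq.inv_add_inv_eq_one
      rw [one_div, one_div, ← hp]
      linarith
    calc ∫ w, ψ ‖w‖ * h w = ∫ w, h w * ψ ‖w‖ := by simp_rw [mul_comm]
      _ ≤ (∫ w, h w ^ p) ^ (1/p) * (∫ w, (ψ ‖w‖) ^ q) ^ (1/q) := main
      _ ≤ (∫ w, h w ^ p) ^ (1/p)
          * (volume (closedBall (0 : EuclideanSpace ℝ (Fin n)) 1)).toReal ^ (1/q) := by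
          refine mul_le_mul_of_nonneg_left ?_
            (Real.rpow_nonneg (integral_nonneg fun w => Real.rpow_nonneg (hh0 w) p) _)
          exact Real.rpow_le_rpow (integral_nonneg fun w => Real.rpow_nonneg (hψ0 w) q)
            hVq (by positivity)
      _ = (∫ w, h w ^ (n:ℝ)) ^ ((1:ℝ)/n)
          * (volume (closedBall (0 : EuclideanSpace ℝ (Fin n)) 1)).toReal ^ (1 - (1:ℝ)/n) := by
          rw [hq_exp]


private lemma key_est {n : ℕ} (hn : 1 ≤ n) {ψ : ℝ → ℝ}
    (hψ_mem : ∀ t : ℝ, 0 ≤ t → ψ t ∈ Set.Icc (0 : ℝ) 1)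
    (hψ_supp : ∀ t : ℝ, 1 ≤ t → ψ t = 0)
    (hψc : Continuous fun w : EuclideanSpace ℝ (Fin n) => ψ ‖w‖)
    (holder : ∀ {h : EuclideanSpace ℝ (Fin n) → ℝ}, (∀ w, 0 ≤ h w) → Continuous h →
      Integrable (fun w => h w ^ (n : ℝ)) volume →
      ∫ w, ψ ‖w‖ * h w
      ≤ (∫ w, h w ^ (n : ℝ)) ^ ((1 : ℝ) / n)
        * (volume (closedBall (0 : EuclideanSpace ℝ (Fin n)) 1)).toReal ^ (1 - (1 : ℝ) / n))
    {ν : ℕ} {u : EuclideanSpace ℝ (Fin n) → EuclideanSpace ℝ (Fin ν)}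
    (hu : ContDiff ℝ 1 u)
    (hInt : Integrable (fun z => ‖fderiv ℝ u z‖ ^ (n : ℝ)) volume)
    {r s : ℝ} (hs : 0 < s) (hsr : s ≤ r) (x : EuclideanSpace ℝ (Fin n)) :
    ‖(∫ w, ψ ‖w‖ • u (x - r • w)) - (∫ w, ψ ‖w‖ • u (x - s • w))‖
      ≤ (r / s - 1) * ((∫ z, ‖fderiv ℝ u z‖ ^ (n : ℝ)) ^ ((1 : ℝ) / n)
          * (volume (closedBall (0 : EuclideanSpace ℝ (Fin n)) 1)).toReal
              ^ (1 - (1 : ℝ) / n)) := by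
  have hr : 0 < r := lt_of_lt_of_le hs hsr
  set g : EuclideanSpace ℝ (Fin n) → ℝ := fun z => ‖fderiv ℝ u z‖ with hgdef
  have hgc : Continuous g := (hu.continuous_fderiv one_ne_zero).norm
  have hg0 : ∀ z, 0 ≤ g z := fun z => norm_nonneg _
  have hψ0 : ∀ w : EuclideanSpace ℝ (Fin n), 0 ≤ ψ ‖w‖ := fun w => (hψ_mem _ (norm_nonneg w)).1
  have hψ1 : ∀ w : EuclideanSpace ℝ (Fin n), ψ ‖w‖ ≤ 1 := fun w => (hψ_mem _ (norm_nonneg w)).2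
  have hψball : ∀ w : EuclideanSpace ℝ (Fin n),
      w ∉ closedBall (0 : EuclideanSpace ℝ (Fin n)) 1 → ψ ‖w‖ = 0 := by
    intro w hw
    refine hψ_supp _ ?_
    simp only [mem_closedBall, dist_zero_right, not_le] at hw
    exact hw.le
  -- integrability of the mollification integrands
  have hint : ∀ ρ : ℝ, Integrable (fun w : EuclideanSpace ℝ (Fin n) =>
      ψ ‖w‖ • u (x - ρ • w)) volume := by
    intro ρ
    refine Continuous.integrable_of_hasCompactSupport
      (hψc.smul (hu.continuous.comp (continuous_const.sub (continuous_const_smul _))))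
      (HasCompactSupport.intro (isCompact_closedBall 0 1) fun w hw => ?_)
    rw [hψball w hw, zero_smul]
  set ν' : Measure ℝ := volume.restrict (Set.Ioc s r) with hν'
  haveI : IsFiniteMeasure ν' := by
    constructor
    rw [hν', Measure.restrict_apply_univ]
    exact measure_Ioc_lt_top
  set F : EuclideanSpace ℝ (Fin n) × ℝ → ℝ := fun p => ψ ‖p.1‖ * g (x - p.2 • p.1) with hFdef
  have hFc : Continuous F :=
    (hψc.comp continuous_fst).mul
      (hgc.comp (continuous_const.sub (continuous_snd.smul continuous_fst)))
  -- bound for g on closedBall x r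
  obtain ⟨B, hB⟩ := (isCompact_closedBall x r).exists_bound_of_continuousOn hgc.continuousOn
  have hgB : ∀ y ∈ closedBall x r, g y ≤ B := by
    intro y hy
    have := hB y hy
    rwa [Real.norm_of_nonneg (hg0 y)] at this
  have hB0 : 0 ≤ B := le_trans (hg0 x) (hgB x (mem_closedBall_self hr.le))
  -- Integrable F on product
  have hψint : Integrable (fun w : EuclideanSpace ℝ (Fin n) => ψ ‖w‖) volume := by
    refine Continuous.integrable_of_hasCompactSupport hψc
      (HasCompactSupport.intro (isCompact_closedBall 0 1) hψball)
  have hae2 : ∀ᵐ p : EuclideanSpace ℝ (Fin n) × ℝ ∂(volume.prod ν'), p.2 ∈ Set.Ioc s r := by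
    rw [ae_iff]
    have hset : {p : EuclideanSpace ℝ (Fin n) × ℝ | ¬ p.2 ∈ Set.Ioc s r}
        = Set.univ ×ˢ (Set.Ioc s r)ᶜ := by
      ext p; simp [Set.mem_prod]
    rw [hset, Measure.prod_prod, hν', Measure.restrict_apply measurableSet_Ioc.compl]
    simp
  have hFint : Integrable F (volume.prod ν') := by
    refine Integrable.mono' (hψint.mul_prod (integrable_const B)) hFc.aestronglyMeasurable ?_
    filter_upwards [hae2] with p hp
    rw [Real.norm_of_nonneg (mul_nonneg (hψ0 p.1) (hg0 _))]
    by_cases hw : ‖p.1‖ ≤ 1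
    · refine mul_le_mul_of_nonneg_left ?_ (hψ0 p.1)
      refine hgB _ ?_
      rw [mem_closedBall, dist_eq_norm]
      have : x - p.2 • p.1 - x = -(p.2 • p.1) := by abel
      rw [this, norm_neg, norm_smul, Real.norm_eq_abs,
        abs_of_pos (hs.trans_le hp.1.le)]
      calc p.2 * ‖p.1‖ ≤ r * 1 :=
        mul_le_mul hp.2 hw (norm_nonneg _) hr.le
        _ = r := mul_one r
    · have : ψ ‖p.1‖ = 0 := hψ_supp _ (le_of_not_ge hw)
      simp [this]
  set Φ : EuclideanSpace ℝ (Fin n) → ℝ := fun w => ∫ t, F (w, t) ∂ν' with hΦdef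
  have hΦint : Integrable Φ volume := hFint.integral_prod_left
  -- pointwise FTC bound
  have ptw : ∀ w : EuclideanSpace ℝ (Fin n),
      ‖ψ ‖w‖ • u (x - r • w) - ψ ‖w‖ • u (x - s • w)‖ ≤ Φ w := by
    intro w
    rw [← smul_sub, norm_smul, Real.norm_of_nonneg (hψ0 w)]
    have hΦw : Φ w = ψ ‖w‖ * ∫ t, g (x - t • w) ∂ν' := by
      simp only [hΦdef, hFdef]
      exact integral_const_mul _ _
    by_cases hw : ‖w‖ ≤ 1
    · rw [hΦw]
      refine mul_le_mul_of_nonneg_left ?_ (hψ0 w)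
      have hderiv : ∀ t ∈ Set.uIcc s r, HasDerivAt (fun t : ℝ => u (x - t • w))
          ((fderiv ℝ u (x - t • w)) (-w)) t := by
        intro t _
        have h1 : HasDerivAt (fun t : ℝ => x - t • w) (-w) t := by
          simpa using ((hasDerivAt_id t).smul_const w).const_sub x
        exact (((hu.differentiable one_ne_zero) (x - t • w)).hasFDerivAt).comp_hasDerivAt t h1
      have hdc : Continuous fun t : ℝ => (fderiv ℝ u (x - t • w)) (-w) :=
        ((hu.continuous_fderiv one_ne_zero).comp
          (continuous_const.sub (continuous_id.smul continuous_const))).clm_apply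
          continuous_const
      have heq : u (x - r • w) - u (x - s • w)
          = ∫ t in s..r, (fderiv ℝ u (x - t • w)) (-w) :=
        (intervalIntegral.integral_eq_sub_of_hasDerivAt hderiv
          (hdc.intervalIntegrable s r)).symm
      rw [heq]
      calc ‖∫ t in s..r, (fderiv ℝ u (x - t • w)) (-w)‖
          ≤ ∫ t in s..r, ‖(fderiv ℝ u (x - t • w)) (-w)‖ :=
            intervalIntegral.norm_integral_le_integral_norm hsr
        _ ≤ ∫ t in s..r, g (x - t • w) := by
            refine intervalIntegral.integral_mono_on hsr
              (Continuous.intervalIntegrable hdc.norm s r)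
              (Continuous.intervalIntegrable (hgc.comp (continuous_const.sub
                (continuous_id.smul continuous_const))) s r) fun t ht => ?_
            calc ‖(fderiv ℝ u (x - t • w)) (-w)‖ ≤ ‖fderiv ℝ u (x - t • w)‖ * ‖-w‖ :=
                ContinuousLinearMap.le_opNorm _ _
              _ ≤ g (x - t • w) * 1 := by
                  rw [norm_neg]
                  exact mul_le_mul_of_nonneg_left hw (hg0 _)
              _ = g (x - t • w) := mul_one _
        _ = ∫ t in Set.Ioc s r, g (x - t • w) := intervalIntegral.integral_of_le hsr
        _ = ∫ t, g (x - t • w) ∂ν' := rfl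
    · have hψw : ψ ‖w‖ = 0 := hψ_supp _ (le_of_not_ge hw)
      rw [hψw, hΦw, hψw, zero_mul, zero_mul]
  have step1 : ‖(∫ w, ψ ‖w‖ • u (x - r • w)) - ∫ w, ψ ‖w‖ • u (x - s • w)‖ ≤ ∫ w, Φ w := by
    rw [← integral_sub (hint r) (hint s)]
    calc ‖∫ w, (ψ ‖w‖ • u (x - r • w) - ψ ‖w‖ • u (x - s • w))‖
        ≤ ∫ w, ‖ψ ‖w‖ • u (x - r • w) - ψ ‖w‖ • u (x - s • w)‖ :=
          norm_integral_le_integral_norm _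
      _ ≤ ∫ w, Φ w := integral_mono_of_nonneg (.of_forall fun w => norm_nonneg _) hΦint
          (.of_forall ptw)
  have hswap : ∫ w, Φ w = ∫ t, (∫ w, F (w, t)) ∂ν' :=
    integral_integral_swap (f := fun w t => F (w, t)) hFint
  set Ep : ℝ := ∫ z, ‖fderiv ℝ u z‖ ^ (n : ℝ) with hEpdef
  have hEp0 : 0 ≤ Ep := by
    rw [hEpdef]
    exact integral_nonneg fun z => Real.rpow_nonneg (norm_nonneg _) _
  set V : ℝ := (volume (closedBall (0 : EuclideanSpace ℝ (Fin n)) 1)).toReal with hVdef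
  set K : ℝ := Ep ^ ((1:ℝ)/n) * V ^ (1 - (1:ℝ)/n) with hKdef
  have hK0 : 0 ≤ K := mul_nonneg (Real.rpow_nonneg hEp0 _)
    (Real.rpow_nonneg ENNReal.toReal_nonneg _)
  have hn0 : (n : ℝ) ≠ 0 := by positivity
  have inner : ∀ t ∈ Set.Ioc s r, (∫ w, F (w, t)) ≤ s⁻¹ * K := by
    intro t ht
    have ht0 : 0 < t := hs.trans ht.1
    have htransl : Integrable (fun y : EuclideanSpace ℝ (Fin n) => g (x + y) ^ (n:ℝ)) volume :=
      hInt.comp_add_left x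
    have hsm : Integrable (fun w : EuclideanSpace ℝ (Fin n) => g (x + (-t) • w) ^ (n:ℝ))
        volume :=
      (integrable_comp_smul_iff volume (fun y => g (x + y) ^ (n:ℝ)) (neg_ne_zero.2 ht0.ne')).2
        htransl
    have hfun : (fun w : EuclideanSpace ℝ (Fin n) => g (x - t • w) ^ (n:ℝ))
        = fun w => g (x + (-t) • w) ^ (n:ℝ) := by
      funext w
      rw [neg_smul, ← sub_eq_add_neg]
    have hval : (∫ w, g (x - t • w) ^ (n:ℝ)) = (t ^ n)⁻¹ * Ep := by
      have h1 := Measure.integral_comp_smul volume (fun y => g (x + y) ^ (n:ℝ)) (-t)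
      rw [finrank_euclideanSpace_fin] at h1
      have h2 : (∫ y, g (x + y) ^ (n:ℝ)) = Ep :=
        integral_add_left_eq_self (μ := volume) (fun y => g y ^ (n:ℝ)) x
      calc (∫ w, g (x - t • w) ^ (n:ℝ)) = ∫ w, g (x + (-t) • w) ^ (n:ℝ) := by rw [hfun]
        _ = |((-t) ^ n)⁻¹| • ∫ y, g (x + y) ^ (n:ℝ) := h1
        _ = (t ^ n)⁻¹ * Ep := by
            rw [h2, abs_inv, abs_pow, abs_neg, abs_of_pos ht0, smul_eq_mul]
    have hh := holder (h := fun w => g (x - t • w)) (fun w => hg0 _)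
      (hgc.comp (continuous_const.sub (continuous_const_smul _)))
      (by rw [hfun]; exact hsm)
    have hpow : ((t ^ n)⁻¹ * Ep) ^ ((1:ℝ)/n) = t⁻¹ * Ep ^ ((1:ℝ)/n) := by
      rw [Real.mul_rpow (inv_nonneg.2 (pow_nonneg ht0.le n)) hEp0]
      congr 1
      have hexp : (-(n:ℝ)) * ((1:ℝ)/n) = -1 := by field_simp
      rw [← Real.rpow_natCast t n, ← Real.rpow_neg ht0.le, ← Real.rpow_mul ht0.le, hexp,
        Real.rpow_neg_one]
    calc (∫ w, F (w, t)) = ∫ w, ψ ‖w‖ * g (x - t • w) := rfl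
      _ ≤ (∫ w, g (x - t • w) ^ (n:ℝ)) ^ ((1:ℝ)/n) * V ^ (1 - (1:ℝ)/n) := hh
      _ = ((t ^ n)⁻¹ * Ep) ^ ((1:ℝ)/n) * V ^ (1 - (1:ℝ)/n) := by rw [hval]
      _ = t⁻¹ * (Ep ^ ((1:ℝ)/n) * V ^ (1 - (1:ℝ)/n)) := by rw [hpow, mul_assoc]
      _ ≤ s⁻¹ * K := by
          rw [hKdef]
          exact mul_le_mul_of_nonneg_right (one_div s ▸ one_div t ▸
            one_div_le_one_div_of_le hs ht.1.le) hK0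
  have step3 : (∫ t, (∫ w, F (w, t)) ∂ν') ≤ ∫ t, s⁻¹ * K ∂ν' := by
    refine integral_mono_of_nonneg
      (.of_forall fun t => integral_nonneg fun w => mul_nonneg (hψ0 _) (hg0 _))
      (integrable_const _) ?_
    have : ∀ᵐ t ∂ν', t ∈ Set.Ioc s r := by
      rw [hν']
      exact ae_restrict_mem measurableSet_Ioc
    filter_upwards [this] with t ht using inner t ht
  have step4 : (∫ t, s⁻¹ * K ∂ν') = (r - s) * (s⁻¹ * K) := by
    rw [integral_const, hν', measureReal_restrict_apply_univ, Real.volume_real_Ioc_of_le hsr,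
      smul_eq_mul]
  calc ‖(∫ w, ψ ‖w‖ • u (x - r • w)) - ∫ w, ψ ‖w‖ • u (x - s • w)‖
      ≤ ∫ w, Φ w := step1
    _ = ∫ t, (∫ w, F (w, t)) ∂ν' := hswap
    _ ≤ ∫ t, s⁻¹ * K ∂ν' := step3
    _ = (r - s) * (s⁻¹ * K) := step4
    _ = (r / s - 1) * K := by
        rw [← mul_assoc]
        congr 1
        field_simp


/-- Let `ψ` be a cutoff function with `∫_{ℝⁿ} ψ(|w|) dw > 0` and let
`u : ℝⁿ → ℝ^ν` be `C¹` with finite critical energy `∫ ‖Du‖ⁿ < ∞`. There is `C = C(n, ψ)` such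
that for all `0 < s ≤ r < 2s`,
`sup_x ‖(ψ_r ∗ u)(x) − (ψ_s ∗ u)(x)‖ ≤ C (r/s − 1) (∫ ‖Du‖ⁿ)^{1/n}`;
in particular `ψ_s ∗ u → ψ_r ∗ u` uniformly as `s → r`, for every `r > 0`. -/
theorem stmt_9 (n : ℕ) (hn : 1 ≤ n) (ψ : ℝ → ℝ) (L : NNReal)
    (hψ_lip : LipschitzOnWith L ψ (Set.Ici 0))
    (hψ_mem : ∀ t : ℝ, 0 ≤ t → ψ t ∈ Set.Icc (0 : ℝ) 1)
    (hψ_supp : ∀ t : ℝ, 1 ≤ t → ψ t = 0)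
    (hψ_pos : 0 < ∫ w : EuclideanSpace ℝ (Fin n), ψ ‖w‖) :
    ∃ C : ℝ, 0 < C ∧
      ∀ (ν : ℕ) (u : EuclideanSpace ℝ (Fin n) → EuclideanSpace ℝ (Fin ν)),
        ContDiff ℝ 1 u →
        Integrable (fun z => ‖fderiv ℝ u z‖ ^ (n : ℝ)) volume →
        (∀ r s : ℝ, 0 < s → s ≤ r → r < 2 * s →
          ∀ x : EuclideanSpace ℝ (Fin n),
            ‖((∫ z, ψ (dist x z / r))⁻¹ • ∫ z, ψ (dist x z / r) • u z)
                - ((∫ z, ψ (dist x z / s))⁻¹ • ∫ z, ψ (dist x z / s) • u z)‖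
              ≤ C * (r / s - 1) *
                (∫ z, ‖fderiv ℝ u z‖ ^ (n : ℝ)) ^ ((1 : ℝ) / n)) ∧
        ∀ r : ℝ, 0 < r →
          TendstoUniformly
            (fun (s : ℝ) (x : EuclideanSpace ℝ (Fin n)) =>
              (∫ z, ψ (dist x z / s))⁻¹ • ∫ z, ψ (dist x z / s) • u z)
            (fun x : EuclideanSpace ℝ (Fin n) =>
              (∫ z, ψ (dist x z / r))⁻¹ • ∫ z, ψ (dist x z / r) • u z)
            (nhdsWithin r (Set.Ioi (0 : ℝ))) := by
  have hψc : Continuous fun w : EuclideanSpace ℝ (Fin n) => ψ ‖w‖ :=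
    hψ_lip.continuousOn.comp_continuous continuous_norm
      (fun w => Set.mem_Ici.2 (norm_nonneg w))
  set c : ℝ := ∫ w : EuclideanSpace ℝ (Fin n), ψ ‖w‖ with hcdef
  have hc : 0 < c := hψ_pos
  set V : ℝ := (volume (closedBall (0 : EuclideanSpace ℝ (Fin n)) 1)).toReal with hVdef
  have hV : 0 < V := by
    refine ENNReal.toReal_pos ?_ measure_closedBall_lt_top.ne
    exact (Metric.measure_closedBall_pos volume 0 one_pos).ne'
  set VP : ℝ := V ^ (1 - (1 : ℝ) / n) with hVPdef
  have hVP : 0 < VP := Real.rpow_pos_of_pos hV _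
  refine ⟨c⁻¹ * VP, mul_pos (inv_pos.2 hc) hVP, ?_⟩
  intro ν u hu hInt
  have holder : ∀ {h : EuclideanSpace ℝ (Fin n) → ℝ}, (∀ w, 0 ≤ h w) → Continuous h →
      Integrable (fun w => h w ^ (n : ℝ)) volume →
      ∫ w, ψ ‖w‖ * h w
      ≤ (∫ w, h w ^ (n : ℝ)) ^ ((1 : ℝ) / n)
        * (volume (closedBall (0 : EuclideanSpace ℝ (Fin n)) 1)).toReal ^ (1 - (1 : ℝ) / n) :=
    fun h1 h2 h3 => holder_step hn hψ_mem hψ_supp hψc h1 h2 h3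
  have key : ∀ {r s : ℝ}, 0 < s → s ≤ r → ∀ x : EuclideanSpace ℝ (Fin n),
      ‖(∫ w, ψ ‖w‖ • u (x - r • w)) - (∫ w, ψ ‖w‖ • u (x - s • w))‖
        ≤ (r / s - 1) * ((∫ z, ‖fderiv ℝ u z‖ ^ (n : ℝ)) ^ ((1 : ℝ) / n) * VP) :=
    fun hs hsr x => key_est hn hψ_mem hψ_supp hψc holder hu hInt hs hsr x
  set Ep : ℝ := ∫ z, ‖fderiv ℝ u z‖ ^ (n : ℝ) with hEpdef
  have hEp0 : 0 ≤ Ep := by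
    rw [hEpdef]
    exact integral_nonneg fun z => Real.rpow_nonneg (norm_nonneg _) _
  have hEpP : 0 ≤ Ep ^ ((1 : ℝ) / n) := Real.rpow_nonneg hEp0 _
  constructor
  · -- the quantitative estimate
    intro r s hs hsr _ x
    have hr : 0 < r := hs.trans_le hsr
    rw [moll_eq ψ u hr x, moll_eq ψ u hs x, ← hcdef, ← smul_sub, norm_smul,
      Real.norm_of_nonneg (inv_nonneg.2 hc.le)]
    calc c⁻¹ * ‖(∫ w, ψ ‖w‖ • u (x - r • w)) - ∫ w, ψ ‖w‖ • u (x - s • w)‖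
        ≤ c⁻¹ * ((r / s - 1) * (Ep ^ ((1 : ℝ) / n) * VP)) :=
          mul_le_mul_of_nonneg_left (key hs hsr x) (inv_nonneg.2 hc.le)
      _ = c⁻¹ * VP * (r / s - 1) * Ep ^ ((1 : ℝ) / n) := by ring
  · -- uniform convergence
    intro r hr
    rw [Metric.tendstoUniformly_iff]
    intro ε hε
    have h1 : ContinuousAt (fun s : ℝ => r / s) r :=
      continuousAt_const.div continuousAt_id hr.ne'
    have h2 : ContinuousAt (fun s : ℝ => s / r) r :=
      continuousAt_id.div continuousAt_const hr.ne'
    have hb : Filter.Tendsto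
        (fun s : ℝ => c⁻¹ * VP * (max (r / s) (s / r) - 1) * Ep ^ ((1 : ℝ) / n))
        (nhdsWithin r (Set.Ioi (0 : ℝ))) (nhds 0) := by
      have h3 : ContinuousAt
          (fun s : ℝ => c⁻¹ * VP * (max (r / s) (s / r) - 1) * Ep ^ ((1 : ℝ) / n)) r :=
        (continuousAt_const.mul ((h1.max h2).sub continuousAt_const)).mul continuousAt_const
      have h4 := h3.tendsto.mono_left (nhdsWithin_le_nhds (s := Set.Ioi (0:ℝ)))
      have h5 : c⁻¹ * VP * (max (r / r) (r / r) - 1) * Ep ^ ((1 : ℝ) / n) = 0 := by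
        rw [div_self hr.ne', max_self]
        ring
      rwa [h5] at h4
    have hev := hb.eventually_lt_const hε
    filter_upwards [hev, self_mem_nhdsWithin] with s hbs hs0
    intro x
    have hs0' : (0 : ℝ) < s := hs0
    refine lt_of_le_of_lt ?_ hbs
    rw [dist_eq_norm, moll_eq ψ u hr x, moll_eq ψ u hs0' x, ← hcdef, ← smul_sub, norm_smul,
      Real.norm_of_nonneg (inv_nonneg.2 hc.le)]
    have hCV : 0 ≤ c⁻¹ * VP := mul_nonneg (inv_nonneg.2 hc.le) hVP.le
    rcases le_total s r with hsle | hrle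
    · calc c⁻¹ * ‖(∫ w, ψ ‖w‖ • u (x - r • w)) - ∫ w, ψ ‖w‖ • u (x - s • w)‖
          ≤ c⁻¹ * ((r / s - 1) * (Ep ^ ((1 : ℝ) / n) * VP)) :=
            mul_le_mul_of_nonneg_left (key hs0' hsle x) (inv_nonneg.2 hc.le)
        _ = c⁻¹ * VP * (r / s - 1) * Ep ^ ((1 : ℝ) / n) := by ring
        _ ≤ c⁻¹ * VP * (max (r / s) (s / r) - 1) * Ep ^ ((1 : ℝ) / n) := by
            refine mul_le_mul_of_nonneg_right ?_ hEpP
            exact mul_le_mul_of_nonneg_left (sub_le_sub_right (le_max_left _ _) 1) hCV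
    · rw [norm_sub_rev]
      calc c⁻¹ * ‖(∫ w, ψ ‖w‖ • u (x - s • w)) - ∫ w, ψ ‖w‖ • u (x - r • w)‖
          ≤ c⁻¹ * ((s / r - 1) * (Ep ^ ((1 : ℝ) / n) * VP)) :=
            mul_le_mul_of_nonneg_left (key hr hrle x) (inv_nonneg.2 hc.le)
        _ = c⁻¹ * VP * (s / r - 1) * Ep ^ ((1 : ℝ) / n) := by ring
        _ ≤ c⁻¹ * VP * (max (r / s) (s / r) - 1) * Ep ^ ((1 : ℝ) / n) := by
            refine mul_le_mul_of_nonneg_right ?_ hEpP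
            exact mul_le_mul_of_nonneg_left (sub_le_sub_right (le_max_right _ _) 1) hCV
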